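/- For every complex number α, (1/2π)·∫₀^{2π} ln| e^{iθ} - α | dθ = ln( max(1, |α|) ), where for |α| = 1 the integrand has an integrable singularity and the identity still holds. -/

import Mathlib

open scoped Real
open Complex Metric MeasureTheory Filter Topology

lemma contin (w : ℂ) (hw : ‖w‖ < 1) :
    Continuous (fun θ : ℝ => Complex.log (1 - w * Complex.exp (θ * Complex.I))) := by
  have hcont : Continuous (fun θ : ℝ => 1 - w * Complex.exp (θ * Complex.I)) := by
    continuity
  refine continuous_iff_continuousAt.2 fun θ => ?_
  refine (continuousAt_clog ?_).comp hcont.continuousAt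
  refine Complex.mem_slitPlane_iff.2 (Or.inl ?_)
  have h1 : (w * Complex.exp (θ * Complex.I)).re ≤ ‖w‖ := by
    calc (w * Complex.exp (θ * Complex.I)).re ≤ ‖w * Complex.exp (θ * Complex.I)‖ :=
          Complex.re_le_norm _
      _ = ‖w‖ := by
          rw [norm_mul, Complex.norm_exp_ofReal_mul_I, mul_one]
  simp only [Complex.sub_re, Complex.one_re]
  linarith

lemma meanvalue (w : ℂ) (hw : ‖w‖ < 1) :
    ∫ θ in (0:ℝ)..(2*π), Real.log (‖1 - w * Complex.exp (θ * Complex.I)‖) = 0 := by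
  set f : ℂ → ℂ := fun z => Complex.log (1 - w * z) with hf
  have hd : DifferentiableOn ℂ f (closedBall 0 1) := by
    intro z hz
    have hz1 : ‖z‖ ≤ 1 := by simpa [Complex.norm_def] using mem_closedBall_zero_iff.1 hz
    have hsp : 1 - w * z ∈ Complex.slitPlane := by
      refine Complex.mem_slitPlane_iff.2 (Or.inl ?_)
      have h1 : (w * z).re ≤ ‖w‖ := by
        calc (w * z).re ≤ ‖w * z‖ := Complex.re_le_norm _
          _ ≤ ‖w‖ := by rw [norm_mul]; nlinarith [norm_nonneg w]
      simp only [Complex.sub_re, Complex.one_re]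
      linarith
    exact ((Complex.differentiableAt_log hsp).comp z
      (((differentiableAt_const _).sub ((differentiableAt_id).const_mul w)))).differentiableWithinAt
  have key := hd.circleIntegral_sub_inv_smul (w := 0) (mem_ball_self one_pos)
  have hf0 : f 0 = 0 := by simp [hf]
  rw [hf0, smul_zero] at key
  -- unfold circle integral
  rw [circleIntegral] at key
  simp only [deriv_circleMap, circleMap, ofReal_one, one_mul, zero_add, sub_zero,
    smul_eq_mul] at key
  have hne : ∀ θ : ℝ, Complex.exp (θ * Complex.I) ≠ 0 := fun θ => Complex.exp_ne_zero _
  have key2 : (∫ θ in (0:ℝ)..(2*π), Complex.I * f (Complex.exp (θ * Complex.I))) = 0 := by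
    rw [← key]
    apply intervalIntegral.integral_congr
    intro θ _
    field_simp [hne θ]
  rw [intervalIntegral.integral_const_mul] at key2
  have key3 : (∫ θ in (0:ℝ)..(2*π), f (Complex.exp (θ * Complex.I))) = 0 := by
    rcases mul_eq_zero.1 key2 with h | h
    · exact absurd h Complex.I_ne_zero
    · exact h
  have hint : IntervalIntegrable (fun θ : ℝ => f (Complex.exp (θ * Complex.I)))
      MeasureTheory.volume 0 (2*π) := (contin w hw).intervalIntegrable _ _
  have := Complex.reCLM.intervalIntegral_comp_comm hint (a := 0) (b := 2*π)
  rw [key3] at this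
  simp only [map_zero] at this
  refine Eq.trans ?_ this
  apply intervalIntegral.integral_congr
  intro θ _
  simp [f, Complex.log_re]

lemma log_intable : IntervalIntegrable Real.log MeasureTheory.volume 0 (2*π) := by
  have h1 : IntervalIntegrable Real.log MeasureTheory.volume 0 1 := by
    have hg : IntervalIntegrable (fun x : ℝ => 2 * x ^ (-(1/2) : ℝ)) MeasureTheory.volume 0 1 :=
      (intervalIntegral.intervalIntegrable_rpow' (by norm_num)).const_mul 2
    refine hg.mono_fun ?_ ?_
    · exact (Real.measurable_log.aestronglyMeasurable).restrict
    · rw [Filter.EventuallyLE, ae_restrict_iff' measurableSet_uIoc]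
      refine Filter.Eventually.of_forall fun x hx => ?_
      rw [Set.uIoc_of_le (by norm_num : (0:ℝ) ≤ 1)] at hx
      obtain ⟨hx0, hx1⟩ := hx
      have hy : (0:ℝ) < x ^ (-(1/2) : ℝ) := Real.rpow_pos_of_pos hx0 _
      have hyy : x ^ (-(1/2) : ℝ) * x ^ (-(1/2) : ℝ) = x⁻¹ := by
        rw [← Real.rpow_add hx0]
        rw [show -(1/2) + -(1/2) = (-1 : ℝ) by norm_num, Real.rpow_neg_one]
      have hlog : Real.log x⁻¹ ≤ 2 * x ^ (-(1/2) : ℝ) := by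
        rw [← hyy, Real.log_mul hy.ne' hy.ne']
        have := Real.log_le_sub_one_of_pos hy
        linarith
      have hlx : Real.log x ≤ 0 := Real.log_nonpos hx0.le hx1
      simp only [Real.norm_eq_abs]
      rw [abs_of_nonpos hlx, _root_.abs_of_nonneg (by positivity : (0:ℝ) ≤ 2 * x ^ (-(1/2):ℝ))]
      rwa [Real.log_inv] at hlog
  have h2 : IntervalIntegrable Real.log MeasureTheory.volume 1 (2*π) := by
    apply ContinuousOn.intervalIntegrable
    apply Real.continuousOn_log.mono
    intro x hx
    rw [Set.uIcc_of_le (by nlinarith [Real.pi_gt_three] : (1:ℝ) ≤ 2*π)] at hx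
    simp only [Set.mem_compl_iff, Set.mem_singleton_iff]
    nlinarith [hx.1]
  exact h1.trans h2

lemma abs_one_sub_exp (θ : ℝ) :
    ‖1 - Complex.exp (θ * Complex.I)‖ = 2 * |Real.sin (θ/2)| := by
  have h : Complex.exp (θ * Complex.I) = Real.cos θ + Real.sin θ * Complex.I := by
    rw [Complex.exp_mul_I, Complex.ofReal_cos, Complex.ofReal_sin]
  have hsq : (‖1 - Complex.exp (θ * Complex.I)‖)^2 = (2 * |Real.sin (θ/2)|)^2 := by
    rw [Complex.sq_norm, h]
    have : (1 - (↑(Real.cos θ) + ↑(Real.sin θ) * Complex.I)) =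
        Complex.mk (1 - Real.cos θ) (-Real.sin θ) := by
      apply Complex.ext <;> simp [Complex.cos_ofReal_re, Complex.sin_ofReal_re]
    rw [this, Complex.normSq_mk]
    have hc : Real.sin (θ/2)^2 = 1/2 - Real.cos θ / 2 := by
      have := Real.sin_sq_eq_half_sub (θ/2)
      rwa [show 2 * (θ/2) = θ by ring] at this
    have hs : Real.sin (θ/2)^2 = |Real.sin (θ/2)|^2 := (_root_.sq_abs _).symm
    nlinarith [Real.sin_sq_add_cos_sq θ]
  have h1 : (0:ℝ) ≤ ‖1 - Complex.exp (θ * Complex.I)‖ := norm_nonneg _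
  have h2 : (0:ℝ) ≤ 2 * |Real.sin (θ/2)| := by positivity
  nlinarith [hsq]

lemma abs_one_sub_exp_ge {θ : ℝ} (h0 : 0 ≤ θ) (h2 : θ ≤ 2*π) :
    θ * (2*π - θ) / π^2 ≤ ‖1 - Complex.exp (θ * Complex.I)‖ := by
  rw [abs_one_sub_exp]
  have hπ := Real.pi_pos
  have hhalf : 0 ≤ θ/2 := by linarith
  have hhalf2 : θ/2 ≤ π := by linarith
  have hs : 0 ≤ Real.sin (θ/2) := Real.sin_nonneg_of_nonneg_of_le_pi hhalf hhalf2
  rw [_root_.abs_of_nonneg hs]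
  -- sin x ≥ (2/π²) x (π - x) for x ∈ [0, π]
  set x := θ/2 with hx
  have key : 2/π^2 * (x * (π - x)) ≤ Real.sin x := by
    have hpos : (0:ℝ) ≤ 2/π^2 := by positivity
    rcases le_or_gt x (π/2) with hle | hlt
    · have h1 := Real.mul_le_sin hhalf hle
      have h2 : 2/π^2 * (x * (π - x)) ≤ 2/π^2 * (x * π) :=
        mul_le_mul_of_nonneg_left (by nlinarith) hpos
      have h3 : 2/π^2 * (x * π) = 2/π * x := by field_simp
      linarith
    · have hx2 : 0 ≤ π - x := by linarith
      have hx3 : π - x ≤ π/2 := by linarith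
      have h1 := Real.mul_le_sin hx2 hx3
      rw [← Real.sin_pi_sub]
      have h2 : 2/π^2 * (x * (π - x)) ≤ 2/π^2 * (π * (π - x)) :=
        mul_le_mul_of_nonneg_left (by nlinarith) hpos
      have h3 : 2/π^2 * (π * (π - x)) = 2/π * (π - x) := by field_simp
      linarith
  calc θ * (2*π - θ) / π^2 = 2 * (2/π^2 * (x * (π - x))) := by field_simp [hx]; ring
    _ ≤ 2 * Real.sin x := by linarith

noncomputable def HH : ℝ → ℝ := fun φ => |Real.log (‖1 - Complex.exp (φ * Complex.I)‖)|

lemma HH_periodic : Function.Periodic HH (2*π) := by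
  intro φ
  unfold HH
  congr 3
  push_cast
  rw [add_mul, Complex.exp_add, Complex.exp_two_pi_mul_I, mul_one]

lemma HH_meas : Measurable HH := by
  apply Measurable.abs
  apply Real.measurable_log.comp
  exact (continuous_norm.comp (by continuity)).measurable

lemma HH_intable : IntervalIntegrable HH MeasureTheory.volume 0 (2*π) := by
  have hπ := Real.pi_pos
  set g : ℝ → ℝ := fun θ => Real.log 2 + 2*Real.log π + |Real.log θ| + |Real.log (2*π - θ)|
    with hg
  have hgint : IntervalIntegrable g MeasureTheory.volume 0 (2*π) := by
    have h1 : IntervalIntegrable (fun θ : ℝ => |Real.log θ|) MeasureTheory.volume 0 (2*π) :=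
      log_intable.abs
    have h2 : IntervalIntegrable (fun θ : ℝ => |Real.log (2*π - θ)|) MeasureTheory.volume
        0 (2*π) := by
      have := (log_intable.comp_sub_left (2*π)).abs
      simpa using this.symm
    exact ((intervalIntegrable_const.add h1).add h2)
  refine hgint.mono_fun (HH_meas.aestronglyMeasurable).restrict ?_
  rw [Filter.EventuallyLE, ae_restrict_iff' measurableSet_uIoc]
  refine Filter.Eventually.of_forall fun θ hθ => ?_
  rw [Set.uIoc_of_le (by positivity : (0:ℝ) ≤ 2*π)] at hθ
  obtain ⟨hθ0, hθ2⟩ := hθ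
  have hub : ‖1 - Complex.exp (θ * Complex.I)‖ ≤ 2 := by
    calc ‖1 - Complex.exp (θ * Complex.I)‖
        ≤ ‖(1:ℂ)‖ + ‖Complex.exp (θ * Complex.I)‖ := by
          exact (norm_sub_le _ _)
      _ = 2 := by rw [norm_one, Complex.norm_exp_ofReal_mul_I]; norm_num
  have hgge : 0 ≤ Real.log 2 + 2*Real.log π + |Real.log θ| + |Real.log (2*π - θ)| := by
    have := Real.log_nonneg (by norm_num : (1:ℝ) ≤ 2)
    have := Real.log_nonneg (by nlinarith [Real.pi_gt_three] : (1:ℝ) ≤ π)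
    positivity
  have hgabs : ‖g θ‖ = g θ := by rw [Real.norm_eq_abs, _root_.abs_of_nonneg hgge]
  rw [hgabs]
  simp only [Real.norm_eq_abs, HH, hg, abs_abs]
  rcases eq_or_lt_of_le hθ2 with rfl | hθlt
  · -- θ = 2π : abs (1 - exp) = 0, log 0 = 0
    have : Complex.exp ((2*π : ℝ) * Complex.I) = 1 := by push_cast; exact Complex.exp_two_pi_mul_I
    rw [this]
    simpa using hgge
  · have hlow := abs_one_sub_exp_ge hθ0.le hθ2
    have hprodpos : 0 < θ * (2*π - θ) / π^2 := by
      have : 0 < 2*π - θ := by linarith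
      positivity
    have habspos : 0 < ‖1 - Complex.exp (θ * Complex.I)‖ := lt_of_lt_of_le hprodpos hlow
    rw [abs_le]
    constructor
    · -- lower bound on log
      have hll : Real.log (θ * (2*π - θ) / π^2) ≤ Real.log (‖1 - Complex.exp (θ * Complex.I)‖) :=
        Real.log_le_log hprodpos hlow
      have h2πθ : 0 < 2*π - θ := by linarith
      have hexp : Real.log (θ * (2*π - θ) / π^2) = Real.log θ + Real.log (2*π - θ) - 2 * Real.log π := by
        rw [Real.log_div (by positivity) (by positivity), Real.log_mul (ne_of_gt hθ0) (ne_of_gt h2πθ),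
          Real.log_pow]
        push_cast; ring
      have h1 : -|Real.log θ| ≤ Real.log θ := neg_abs_le _
      have h2 : -|Real.log (2*π - θ)| ≤ Real.log (2*π - θ) := neg_abs_le _
      have hl2 : (0:ℝ) ≤ Real.log 2 := Real.log_nonneg (by norm_num)
      linarith
    · have := Real.log_le_log habspos hub
      have h1 : (0:ℝ) ≤ |Real.log θ| := abs_nonneg _
      have h2 : (0:ℝ) ≤ |Real.log (2*π - θ)| := abs_nonneg _
      have hπ1 : (0:ℝ) ≤ Real.log π := Real.log_nonneg (by nlinarith [Real.pi_gt_three])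
      linarith

lemma HH_intable_shift (ψ : ℝ) (hψ1 : -π < ψ) (hψ2 : ψ ≤ π) :
    IntervalIntegrable (fun θ : ℝ => HH (θ + ψ)) MeasureTheory.volume 0 (2*π) := by
  have hπ := Real.pi_pos
  have hbig : IntervalIntegrable HH MeasureTheory.volume (-(2*π)) (4*π) := by
    have hmid := HH_intable
    have hleft : IntervalIntegrable HH MeasureTheory.volume (-(2*π)) 0 := by
      have := HH_intable.comp_sub_right (-(2*π))
      have heq : (fun x => HH (x - -(2*π))) = HH := by
        funext x
        rw [sub_neg_eq_add, HH_periodic x]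
      rw [heq] at this
      simpa using this
    have hright : IntervalIntegrable HH MeasureTheory.volume (2*π) (4*π) := by
      have := HH_intable.comp_sub_right (2*π)
      have heq : (fun x => HH (x - 2*π)) = HH := by
        funext x
        rw [← HH_periodic (x - 2*π), sub_add_cancel]
      rw [heq] at this
      have e1 : 0 + 2*π = 2*π := by ring
      have e2 : 2*π + 2*π = 4*π := by ring
      rwa [e1, e2] at this
    exact (hleft.trans hmid).trans hright
  have hsub : IntervalIntegrable HH MeasureTheory.volume ψ (2*π + ψ) := by
    apply hbig.mono_set
    rw [Set.uIcc_of_le (by linarith), Set.uIcc_of_le (by linarith)]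
    apply Set.Icc_subset_Icc <;> linarith
  have := hsub.comp_add_right ψ
  simpa using this

lemma abs_one_sub_pos (w : ℂ) (hw : ‖w‖ < 1) (θ : ℝ) :
    0 < ‖1 - w * Complex.exp (θ * Complex.I)‖ := by
  have habs : ‖w * Complex.exp (θ * Complex.I)‖ = ‖w‖ := by
    rw [norm_mul, Complex.norm_exp_ofReal_mul_I, mul_one]
  have h2 := norm_sub_norm_le (1 : ℂ) (w * Complex.exp (θ * Complex.I))
  simp only [norm_one] at h2
  rw [habs] at h2
  linarith

lemma continR (w : ℂ) (hw : ‖w‖ < 1) :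
    Continuous (fun θ : ℝ => Real.log (‖1 - w * Complex.exp (θ * Complex.I)‖)) := by
  have hcont : Continuous (fun θ : ℝ => ‖1 - w * Complex.exp (θ * Complex.I)‖) := by
    apply continuous_norm.comp
    continuity
  exact hcont.log fun θ => (abs_one_sub_pos w hw θ).ne'

lemma case_one (w : ℂ) (hw : ‖w‖ = 1) :
    ∫ θ in (0:ℝ)..(2*π), Real.log (‖1 - w * Complex.exp (θ * Complex.I)‖) = 0 := by
  have hπ := Real.pi_pos
  have hw0 : w ≠ 0 := by
    intro h; rw [h] at hw; simp at hw
  set ψ := Complex.arg w with hψ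
  have hwψ : Complex.exp (ψ * Complex.I) = w := by
    have := Complex.norm_mul_exp_arg_mul_I w
    rwa [hw, Complex.ofReal_one, one_mul] at this
  -- the sequence r n → 1
  set r : ℕ → ℝ := fun n => 1 - 1/(2*(n+1)) with hr
  clear_value r
  have hr1 : ∀ n, r n < 1 := by
    intro n; simp only [hr]
    have : (0:ℝ) < 1/(2*(n+1)) := by positivity
    linarith
  have hr2 : ∀ n, (1:ℝ)/2 ≤ r n := by
    intro n; simp only [hr]
    have h1 : (1:ℝ)/(2*(n+1)) ≤ 1/2 := by
      apply div_le_div_of_nonneg_left (by norm_num) (by norm_num)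
      have : (0:ℝ) ≤ n := Nat.cast_nonneg n
      linarith
    linarith
  have hr0 : ∀ n, (0:ℝ) < r n := fun n => lt_of_lt_of_le (by norm_num) (hr2 n)
  have hrt : Tendsto r atTop (𝓝 1) := by
    have hat : Tendsto (fun n : ℕ => 2*((n:ℝ)+1)) atTop atTop := by
      apply Filter.Tendsto.const_mul_atTop (by norm_num : (0:ℝ) < 2)
      exact tendsto_atTop_add_const_right _ 1 tendsto_natCast_atTop_atTop
    have h0 : Tendsto (fun n : ℕ => 1/(2*((n:ℝ)+1))) atTop (𝓝 0) := by
      simpa only [one_div, Pi.inv_def] using hat.inv_tendsto_atTop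
    rw [hr]
    have := (tendsto_const_nhds (x := (1:ℝ)) (f := atTop)).sub h0
    simpa using this
  set F : ℕ → ℝ → ℝ := fun n θ =>
    Real.log (‖1 - ((r n : ℂ) * w) * Complex.exp (θ * Complex.I)‖) with hF
  have habsrw : ∀ n, ‖(r n : ℂ) * w‖ = r n := by
    intro n
    rw [norm_mul, hw, mul_one, Complex.norm_of_nonneg (hr0 n).le]
  have habsrw1 : ∀ n, ‖(r n : ℂ) * w‖ < 1 := fun n => by rw [habsrw n]; exact hr1 n
  -- the bad set
  set S : Set ℝ := {θ : ℝ | w * Complex.exp (θ * Complex.I) = 1} with hS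
  have hSzero : MeasureTheory.volume S = 0 := by
    by_cases hel : ∃ θ₀, θ₀ ∈ S
    · obtain ⟨θ₀, hθ₀⟩ := hel
      have hsub : S ⊆ Set.range (fun k : ℤ => θ₀ + k * (2*π)) := by
        intro θ hθ
        have h1 : Complex.exp (θ * Complex.I) = Complex.exp (θ₀ * Complex.I) := by
          have := hθ₀
          simp only [hS, Set.mem_setOf_eq] at hθ this
          exact mul_left_cancel₀ hw0 (by rw [hθ, this])
        obtain ⟨n, hn⟩ := Complex.exp_eq_exp_iff_exists_int.1 h1
        refine ⟨n, ?_⟩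
        have h2 : (θ : ℂ) * Complex.I = ((θ₀ + n * (2*π) : ℝ) : ℂ) * Complex.I := by
          rw [hn]; push_cast; ring
        have h3 : (θ : ℂ) = ((θ₀ + n * (2*π) : ℝ) : ℂ) :=
          mul_right_cancel₀ Complex.I_ne_zero h2
        have h4 : θ = θ₀ + n * (2*π) := by exact_mod_cast h3
        rw [h4]
      exact measure_mono_null hsub ((Set.countable_range _).measure_zero _)
    · have : S = ∅ := Set.eq_empty_iff_forall_notMem.2 (fun x hx => hel ⟨x, hx⟩)
      rw [this]; exact measure_empty
  have hae : ∀ᵐ θ ∂(MeasureTheory.volume : Measure ℝ), θ ∉ S :=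
    measure_eq_zero_iff_ae_notMem.1 hSzero
  -- bound
  set bound : ℝ → ℝ := fun θ =>
    Real.log 2 + |Real.log (‖1 - w * Complex.exp (θ * Complex.I)‖)| with hbound
  have hbound_int : IntervalIntegrable bound MeasureTheory.volume 0 (2*π) := by
    have heq : (fun θ : ℝ => HH (θ + ψ)) =
        (fun θ : ℝ => |Real.log (‖1 - w * Complex.exp (θ * Complex.I)‖)|) := by
      funext θ
      unfold HH
      congr 3
      rw [← hwψ, ← Complex.exp_add]
      push_cast
      ring_nf
    have := HH_intable_shift ψ (Complex.neg_pi_lt_arg w) (Complex.arg_le_pi w)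
    rw [heq] at this
    exact intervalIntegrable_const.add this
  -- key pointwise bound
  have hkey : ∀ n, ∀ θ : ℝ, θ ∉ S → |F n θ| ≤ bound θ := by
    intro n θ hθ
    set z := w * Complex.exp (θ * Complex.I) with hz
    have hz1 : ‖z‖ = 1 := by
      rw [hz, norm_mul, hw, Complex.norm_exp_ofReal_mul_I, mul_one]
    have hzne : z ≠ 1 := hθ
    have hs : 0 < ‖1 - z‖ := by
      rw [← norm_pos_iff] at *
      simpa using sub_ne_zero.2 (Ne.symm hzne)
    set s := ‖1 - z‖ with hs'
    set t := ‖1 - (r n : ℂ) * z‖ with ht'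
    have hFn : F n θ = Real.log t := by
      rw [hF, ht', hz]; ring_nf
    have ht0 : 0 < t := by
      rw [ht']
      have h2 := norm_sub_norm_le (1 : ℂ) ((r n : ℂ) * z)
      simp only [norm_one] at h2
      have : ‖(r n : ℂ) * z‖ = r n := by
        rw [norm_mul, hz1, mul_one, Complex.norm_of_nonneg (hr0 n).le]
      rw [this] at h2
      have := hr1 n
      linarith
    -- s^2 ≤ 2 t^2
    have hsq : s^2 ≤ 2 * t^2 := by
      have hzsq : z.re^2 + z.im^2 = 1 := by
        have := Complex.sq_norm z
        rw [hz1] at this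
        simp [Complex.normSq_apply] at this
        nlinarith [this]
      have hzre : z.re ≤ 1 := by nlinarith [sq_nonneg z.im]
      have hssq : s^2 = (1 - z.re)^2 + z.im^2 := by
        rw [hs', Complex.sq_norm, Complex.normSq_apply]
        simp
        ring
      have htsq : t^2 = (1 - r n * z.re)^2 + (r n * z.im)^2 := by
        rw [ht', Complex.sq_norm, Complex.normSq_apply]
        simp
        ring
      rw [hssq, htsq]
      have h2r : (0:ℝ) ≤ 2 * r n - 1 := by have := hr2 n; linarith
      nlinarith [hr1 n, sq_nonneg (1 - r n), mul_nonneg h2r (by linarith : (0:ℝ) ≤ 1 - z.re)]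
    -- upper bound t ≤ 2
    have htub : t ≤ 2 := by
      rw [ht']
      calc ‖1 - (r n : ℂ) * z‖ ≤ ‖1‖ + ‖(r n : ℂ) * z‖ :=
            norm_sub_le _ _
        _ ≤ 2 := by
            rw [norm_one, norm_mul, hz1, mul_one, Complex.norm_of_nonneg (hr0 n).le]
            linarith [hr1 n]
    rw [hFn]
    simp only [hbound]
    rw [abs_le]
    constructor
    · -- log t ≥ log s - log 2 ≥ ...
      have h1 : Real.log (s^2) ≤ Real.log (2 * t^2) := Real.log_le_log (by positivity) hsq
      rw [Real.log_mul (by norm_num) (by positivity), Real.log_pow, Real.log_pow] at h1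
      push_cast at h1
      have h2 : -|Real.log s| ≤ Real.log s := neg_abs_le _
      have hl2 : (0:ℝ) ≤ Real.log 2 := Real.log_nonneg (by norm_num)
      have : Real.log s - Real.log 2 ≤ Real.log t := by linarith
      have habseq : |Real.log (‖1 - w * Complex.exp (θ * Complex.I)‖)| = |Real.log s| := by
        rw [hs', hz]
      rw [habseq]
      linarith
    · have h1 : Real.log t ≤ Real.log 2 := Real.log_le_log ht0 htub
      have habseq : |Real.log (‖1 - w * Complex.exp (θ * Complex.I)‖)| = |Real.log s| := by
        rw [hs', hz]
      rw [habseq]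
      have := abs_nonneg (Real.log s)
      linarith
  -- DCT
  have hdct : Tendsto (fun n => ∫ θ in (0:ℝ)..(2*π), F n θ) atTop
      (𝓝 (∫ θ in (0:ℝ)..(2*π), Real.log (‖1 - w * Complex.exp (θ * Complex.I)‖))) := by
    apply intervalIntegral.tendsto_integral_filter_of_dominated_convergence bound
    · exact Filter.Eventually.of_forall fun n =>
        ((continR _ (habsrw1 n)).aestronglyMeasurable).restrict
    · refine Filter.Eventually.of_forall fun n => ?_
      filter_upwards [hae] with θ hθ _
      rw [Real.norm_eq_abs]
      exact hkey n θ hθ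
    · exact hbound_int
    · filter_upwards [hae] with θ hθ _
      have hzne : w * Complex.exp (θ * Complex.I) ≠ 1 := hθ
      have hs : ‖1 - w * Complex.exp (θ * Complex.I)‖ ≠ 0 := by
        simp only [ne_eq, norm_eq_zero, sub_eq_zero]
        exact fun h => hzne h.symm
      have hc2 : Continuous (fun ρ : ℝ => ‖1 - (ρ:ℂ) * (w * Complex.exp (θ * Complex.I))‖) := by
        apply continuous_norm.comp
        continuity
      have hcont : ContinuousAt (fun ρ : ℝ =>
          Real.log (‖1 - (ρ:ℂ) * (w * Complex.exp (θ * Complex.I))‖)) 1 := by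
        refine (hc2.continuousAt).log ?_
        simpa using hs
      have hcomp := hcont.tendsto.comp hrt
      have heq : (fun n => F n θ) = (fun ρ : ℝ =>
          Real.log (‖1 - (ρ:ℂ) * (w * Complex.exp (θ * Complex.I))‖)) ∘ r := by
        funext n
        simp only [hF, Function.comp_apply, mul_assoc]
      rw [heq]
      have h1z : (1 : ℂ) - ((1:ℝ):ℂ) * (w * Complex.exp (θ * Complex.I))
          = 1 - w * Complex.exp (θ * Complex.I) := by
        norm_num
      rw [show Real.log (‖1 - w * Complex.exp (θ * Complex.I)‖)
          = Real.log (‖1 - ((1:ℝ):ℂ) * (w * Complex.exp (θ * Complex.I))‖) by rw [h1z]]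
      exact hcomp
  have hzero : ∀ n, (∫ θ in (0:ℝ)..(2*π), F n θ) = 0 := fun n => meanvalue _ (habsrw1 n)
  have : Tendsto (fun n => ∫ θ in (0:ℝ)..(2*π), F n θ) atTop (𝓝 0) := by
    simp only [hzero]
    exact tendsto_const_nhds
  exact (tendsto_nhds_unique hdct this)

lemma conj_trick (α : ℂ) (θ : ℝ) :
    ‖Complex.exp (θ * Complex.I) - α‖
      = ‖1 - (starRingEnd ℂ) α * Complex.exp (θ * Complex.I)‖ := by
  have hmul : Complex.exp (θ * Complex.I) - α
      = Complex.exp (θ * Complex.I) * (1 - α * Complex.exp (-(θ * Complex.I))) := by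
    rw [mul_sub, mul_one]
    congr 1
    rw [mul_comm α _, ← mul_assoc, ← Complex.exp_add]
    simp
  rw [hmul, norm_mul, Complex.norm_exp_ofReal_mul_I, one_mul]
  rw [← Complex.norm_conj]
  congr 1
  rw [map_sub, map_one, map_mul, ← Complex.exp_conj]
  congr 2
  simp [Complex.conj_I]

/-- Jensen's formula / Mahler measure of the linear polynomial `X - α`. -/
theorem stmt9 (α : ℂ) :
    (1 / (2 * π)) * ∫ θ in (0:ℝ)..(2 * π),
        Real.log (‖Complex.exp (θ * Complex.I) - α‖)
      = Real.log (max 1 (‖α‖)) := by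
  have hπ := Real.pi_pos
  rcases lt_trichotomy (‖α‖) 1 with h | h | h
  · have hcongr : (∫ θ in (0:ℝ)..(2 * π),
        Real.log (‖Complex.exp (θ * Complex.I) - α‖))
        = ∫ θ in (0:ℝ)..(2*π),
        Real.log (‖1 - (starRingEnd ℂ) α * Complex.exp (θ * Complex.I)‖) := by
      apply intervalIntegral.integral_congr
      intro θ _
      simp only []
      rw [conj_trick α θ]
    rw [hcongr, meanvalue _ (by rwa [Complex.norm_conj]), max_eq_left h.le]
    simp
  · have hcongr : (∫ θ in (0:ℝ)..(2 * π),
        Real.log (‖Complex.exp (θ * Complex.I) - α‖))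
        = ∫ θ in (0:ℝ)..(2*π),
        Real.log (‖1 - (starRingEnd ℂ) α * Complex.exp (θ * Complex.I)‖) := by
      apply intervalIntegral.integral_congr
      intro θ _
      simp only []
      rw [conj_trick α θ]
    rw [hcongr, case_one _ (by rwa [Complex.norm_conj]), max_eq_left h.le]
    simp
  · have hα0 : α ≠ 0 := by
      intro h0; rw [h0] at h; simp at h; linarith
    have hinv : ‖α⁻¹‖ < 1 := by
      rw [norm_inv]
      rw [inv_lt_one_iff₀]
      right; exact h
    have hsplit : ∀ θ : ℝ, Real.log (‖Complex.exp (θ * Complex.I) - α‖)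
        = Real.log (‖α‖)
          + Real.log (‖1 - α⁻¹ * Complex.exp (θ * Complex.I)‖) := by
      intro θ
      have hfac : Complex.exp (θ * Complex.I) - α
          = (-α) * (1 - α⁻¹ * Complex.exp (θ * Complex.I)) := by
        field_simp
        ring
      rw [hfac, norm_mul, norm_neg]
      rw [Real.log_mul (by simpa using hα0) (abs_one_sub_pos _ hinv θ).ne']
    have hcongr : (∫ θ in (0:ℝ)..(2 * π),
        Real.log (‖Complex.exp (θ * Complex.I) - α‖))
        = ∫ θ in (0:ℝ)..(2*π), (Real.log (‖α‖)
          + Real.log (‖1 - α⁻¹ * Complex.exp (θ * Complex.I)‖)) := by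
      apply intervalIntegral.integral_congr
      intro θ _
      exact hsplit θ
    rw [hcongr, intervalIntegral.integral_add intervalIntegrable_const
      ((continR _ hinv).intervalIntegrable _ _), meanvalue _ hinv,
      intervalIntegral.integral_const, max_eq_right h.le]
    simp only [add_zero, smul_eq_mul, sub_zero]
    field_simp
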